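/- arXiv:2603.19479 — 5 statements merged into one kernel-verified Lean document; each statement's English description precedes it below -/
import Mathlib

section
/- Let P = L⁽¹⁾ ×_M ⋯ ×_M L⁽ⁿ⁾ be a fiber product of polytopes in standard form and let x = (x⁽¹⁾, …, x⁽ⁿ⁾) ∈ P. Then x is an extreme point of P if and only if the set {(y⁽¹⁾, …, y⁽ⁿ⁾) : y⁽ⁱ⁾ ∈ Conv(Vsupp(x⁽ⁱ⁾)) for all i, and f₁(y⁽¹⁾) = ⋯ = fₙ(y⁽ⁿ⁾)} consists only of the point x. -/
/-- The support of a vector: the set of indices with nonzero coordinate. -/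
def supp {d : ℕ} (x : Fin d → ℝ) : Set (Fin d) := {i | x i ≠ 0}

/-- A polytope in standard form: a bounded intersection of an affine subspace
(given by linear equations `A x = b`) with the nonnegative orthant. -/
def StdForm {d : ℕ} (L : Set (Fin d → ℝ)) : Prop :=
  Bornology.IsBounded L ∧
    ∃ (k : ℕ) (A : Matrix (Fin k) (Fin d) ℝ) (b : Fin k → ℝ),
      L = {x | A.mulVec x = b ∧ ∀ i, 0 ≤ x i}

/-- A (general) polytope: a bounded intersection of finitely many closed half-spaces. -/
def IsPolytope {d : ℕ} (M : Set (Fin d → ℝ)) : Prop :=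
  Bornology.IsBounded M ∧
    ∃ (k : ℕ) (A : Matrix (Fin k) (Fin d) ℝ) (b : Fin k → ℝ),
      M = {x | ∀ i, A.mulVec x i ≤ b i}

/-- The vertex support of `x` in `L`: the set of extreme points (vertices) of `L`
whose support is contained in the support of `x`. -/
def Vsupp {d : ℕ} (L : Set (Fin d → ℝ)) (x : Fin d → ℝ) : Set (Fin d → ℝ) :=
  {y ∈ Set.extremePoints ℝ L | supp y ⊆ supp x}

/-- The fiber product `L⁽¹⁾ ×_M ⋯ ×_M L⁽ⁿ⁾` of the polytopes `L i` over the affine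
maps `f i`: tuples that are componentwise in the `L i` and whose images under the
`f i` all agree. -/
def FiberProd {n e : ℕ} (d : Fin n → ℕ) (L : ∀ i, Set (Fin (d i) → ℝ))
    (f : ∀ i, (Fin (d i) → ℝ) →ᵃ[ℝ] (Fin e → ℝ)) : Set (∀ i, Fin (d i) → ℝ) :=
  {x | (∀ i, x i ∈ L i) ∧ ∀ i j, f i (x i) = f j (x j)}

open Finset in
lemma step_lemma {d k : ℕ} (A : Matrix (Fin k) (Fin d) ℝ) (b : Fin k → ℝ)
    (C : ℝ) (hC : ∀ w : Fin d → ℝ, (A.mulVec w = b ∧ ∀ i, 0 ≤ w i) → ‖w‖ ≤ C)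
    (x v : Fin d → ℝ) (hx1 : A.mulVec x = b) (hx2 : ∀ i, 0 ≤ x i)
    (hv : A.mulVec v = 0) (hv0 : v ≠ 0) (hsupp : ∀ j, x j = 0 → v j = 0) :
    ∃ t : ℝ, 0 < t ∧ (A.mulVec (x + t • v) = b ∧ ∀ i, 0 ≤ (x + t • v) i) ∧
      (∀ j, x j = 0 → (x + t • v) j = 0) ∧ ∃ j, x j ≠ 0 ∧ (x + t • v) j = 0 := by
  have hmul : ∀ t : ℝ, A.mulVec (x + t • v) = b := by
    intro t
    rw [Matrix.mulVec_add, Matrix.mulVec_smul, hv, smul_zero, add_zero, hx1]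
  have happ : ∀ (t : ℝ) (j : Fin d), (x + t • v) j = x j + t * v j := by
    intro t j; simp
  -- there is a coordinate where v is negative
  have hneg : ∃ j, v j < 0 := by
    by_contra h
    push_neg at h
    obtain ⟨j0, hj0⟩ : ∃ j0, v j0 ≠ 0 := Function.ne_iff.mp hv0
    have hj0' : 0 < v j0 := lt_of_le_of_ne (h j0) (Ne.symm hj0)
    set t0 : ℝ := (|C| + 1) / v j0 with ht0def
    have ht0 : 0 < t0 := by positivity
    have hw : ‖x + t0 • v‖ ≤ C := by
      refine hC _ ⟨hmul t0, fun j => ?_⟩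
      rw [happ]
      have := hx2 j
      have := h j
      nlinarith
    have h1 : (x + t0 • v) j0 ≤ ‖x + t0 • v‖ := by
      calc (x + t0 • v) j0 ≤ |(x + t0 • v) j0| := le_abs_self _
        _ ≤ ‖x + t0 • v‖ := by
            rw [← Real.norm_eq_abs]; exact norm_le_pi_norm _ j0
    have h2 : |C| + 1 ≤ (x + t0 • v) j0 := by
      rw [happ]
      have : t0 * v j0 = |C| + 1 := by
        rw [ht0def, div_mul_cancel₀ _ (ne_of_gt hj0')]
      nlinarith [hx2 j0]
    have : C ≤ |C| := le_abs_self C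
    linarith
  obtain ⟨j1, hj1⟩ := hneg
  have hJne : (univ.filter (fun j => v j < 0)).Nonempty :=
    ⟨j1, by simp [hj1]⟩
  obtain ⟨js, hjs, hmin⟩ := Finset.exists_min_image _ (fun j => x j / (-v j)) hJne
  rw [mem_filter] at hjs
  have hvjs : v js < 0 := hjs.2
  have hxjs : x js ≠ 0 := fun h => absurd (hsupp js h) (ne_of_lt hvjs)
  have hxjs' : 0 < x js := lt_of_le_of_ne (hx2 js) (Ne.symm hxjs)
  set t : ℝ := x js / (-v js) with htdef
  have ht : 0 < t := div_pos hxjs' (by linarith)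
  refine ⟨t, ht, ⟨hmul t, fun j => ?_⟩, fun j hj => ?_, js, hxjs, ?_⟩
  · rw [happ]
    by_cases hvj : v j < 0
    · have := hmin j (by simp [hvj])
      rw [le_div_iff₀ (by linarith : (0:ℝ) < -v j)] at this
      nlinarith
    · push_neg at hvj
      have := hx2 j
      nlinarith
  · rw [happ, hj, hsupp j hj]; ring
  · rw [happ, htdef]
    have : x js / -v js * v js = -x js := by
      rw [div_mul_eq_mul_div, div_neg, mul_div_assoc, div_self (ne_of_lt hvjs), mul_one]
    rw [this]; ring

lemma Vsupp_mono {d : ℕ} (L : Set (Fin d → ℝ)) {x y : Fin d → ℝ}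
    (h : supp y ⊆ supp x) : Vsupp L y ⊆ Vsupp L x :=
  fun z hz => ⟨hz.1, hz.2.trans h⟩

lemma supp_subset_iff {d : ℕ} {x y : Fin d → ℝ} :
    supp y ⊆ supp x ↔ ∀ j, x j = 0 → y j = 0 := by
  constructor
  · intro h j hj
    by_contra hy
    exact (h hy) hj
  · intro h j hj
    by_contra hx
    exact hj (h j (not_not.mp hx))

lemma mem_convexHull_Vsupp {d : ℕ} {L : Set (Fin d → ℝ)} (hL : StdForm L)
    {x : Fin d → ℝ} (hx : x ∈ L) : x ∈ convexHull ℝ (Vsupp L x) := by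
  classical
  obtain ⟨hbdd, k, A, b, rfl⟩ := hL
  obtain ⟨C, hC⟩ := isBounded_iff_forall_norm_le.mp hbdd
  set L : Set (Fin d → ℝ) := {x | A.mulVec x = b ∧ ∀ i, 0 ≤ x i} with hLdef
  clear_value L
  subst hLdef
  generalize hN : (Finset.univ.filter fun j => x j ≠ 0).card = N
  induction N using Nat.strong_induction_on generalizing x with
  | _ N ih =>
    by_cases hext : x ∈ Set.extremePoints ℝ {x | A.mulVec x = b ∧ ∀ i, 0 ≤ x i}
    · exact subset_convexHull ℝ _ ⟨hext, subset_rfl⟩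
    · rw [mem_extremePoints] at hext
      push_neg at hext
      obtain ⟨y, hy, z, hz, hseg, hne⟩ := hext hx
      obtain ⟨a, c, ha, hc, hac, habc⟩ := hseg
      -- y ≠ x
      have hyx : y ≠ x := by
        intro h
        subst h
        apply hne rfl
        have : c • z = c • y := by
          have h1 : a • y + c • z = y := habc
          have h2 : (a + c) • y = y := by rw [hac, one_smul]
          rw [add_smul] at h2
          linear_combination (norm := module) h1 - h2
        funext j
        have := congrFun this j
        simp only [Pi.smul_apply, smul_eq_mul] at this
        exact mul_left_cancel₀ (ne_of_gt hc) this.symm |>.symm ▸ rfl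
      set v : Fin d → ℝ := y - x with hvdef
      have hv0 : v ≠ 0 := sub_ne_zero.mpr hyx
      have hAv : A.mulVec v = 0 := by
        rw [hvdef, Matrix.mulVec_sub, hy.1, hx.1, sub_self]
      have hsuppv : ∀ j, x j = 0 → v j = 0 := by
        intro j hj
        have hxj := congrFun habc j
        simp only [Pi.add_apply, Pi.smul_apply, smul_eq_mul] at hxj
        rw [hj] at hxj
        have h1 : 0 ≤ a * y j := mul_nonneg ha.le (hy.2 j)
        have h2 : 0 ≤ c * z j := mul_nonneg hc.le (hz.2 j)
        have hyj : y j = 0 := by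
          have : a * y j = 0 := by linarith
          exact (mul_eq_zero.mp this).resolve_left (ne_of_gt ha)
        simp [hvdef, hyj, hj]
      -- apply the step lemma in both directions
      obtain ⟨t₁, ht₁, hp, hp0, jp, hjp, hjp0⟩ :=
        step_lemma A b C (fun w hw => hC w hw) x v hx.1 hx.2 hAv hv0 hsuppv
      obtain ⟨t₂, ht₂, hq, hq0, jq, hjq, hjq0⟩ :=
        step_lemma A b C (fun w hw => hC w hw) x (-v) hx.1 hx.2
          (by rw [Matrix.mulVec_neg, hAv, neg_zero]) (neg_ne_zero.mpr hv0)
          (fun j hj => by rw [Pi.neg_apply, hsuppv j hj, neg_zero])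
      set p : Fin d → ℝ := x + t₁ • v with hpdef
      set q : Fin d → ℝ := x + t₂ • (-v) with hqdef
      -- supports strictly smaller
      have hsupp_p : ∀ j, x j = 0 → p j = 0 := hp0
      have hsupp_q : ∀ j, x j = 0 → q j = 0 := hq0
      have hcard_p : (Finset.univ.filter fun j => p j ≠ 0).card < N := by
        rw [← hN]
        apply Finset.card_lt_card
        constructor
        · intro j hj
          simp only [Finset.mem_filter, Finset.mem_univ, true_and] at hj ⊢
          intro h; exact hj (hsupp_p j h)
        · intro hsub
          have := hsub (Finset.mem_filter.mpr ⟨Finset.mem_univ jp, hjp⟩)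
          simp only [Finset.mem_filter, Finset.mem_univ, true_and] at this
          exact this hjp0
      have hcard_q : (Finset.univ.filter fun j => q j ≠ 0).card < N := by
        rw [← hN]
        apply Finset.card_lt_card
        constructor
        · intro j hj
          simp only [Finset.mem_filter, Finset.mem_univ, true_and] at hj ⊢
          intro h; exact hj (hsupp_q j h)
        · intro hsub
          have := hsub (Finset.mem_filter.mpr ⟨Finset.mem_univ jq, hjq⟩)
          simp only [Finset.mem_filter, Finset.mem_univ, true_and] at this
          exact this hjq0
      have hpmem : p ∈ convexHull ℝ (Vsupp {x | A.mulVec x = b ∧ ∀ i, 0 ≤ x i} p) :=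
        ih _ hcard_p hp rfl
      have hqmem : q ∈ convexHull ℝ (Vsupp {x | A.mulVec x = b ∧ ∀ i, 0 ≤ x i} q) :=
        ih _ hcard_q hq rfl
      have hpmem' : p ∈ convexHull ℝ (Vsupp {x | A.mulVec x = b ∧ ∀ i, 0 ≤ x i} x) :=
        convexHull_mono (Vsupp_mono _ (supp_subset_iff.mpr hsupp_p)) hpmem
      have hqmem' : q ∈ convexHull ℝ (Vsupp {x | A.mulVec x = b ∧ ∀ i, 0 ≤ x i} x) :=
        convexHull_mono (Vsupp_mono _ (supp_subset_iff.mpr hsupp_q)) hqmem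
      -- x is a convex combination of p and q
      have hts : 0 < t₁ + t₂ := by linarith
      have hxc : (t₂ / (t₁ + t₂)) • p + (t₁ / (t₁ + t₂)) • q = x := by
        rw [hpdef, hqdef]
        have h1 : t₂ / (t₁ + t₂) + t₁ / (t₁ + t₂) = 1 := by
          rw [← add_div, add_comm]
          exact div_self (ne_of_gt hts)
        have h2 : (t₂ / (t₁ + t₂)) * t₁ - (t₁ / (t₁ + t₂)) * t₂ = 0 := by
          field_simp; ring
        linear_combination (norm := module) (h1 : _) • x + (h2 : _) • v
      have hfin := (convex_convexHull ℝ
          (Vsupp {x | A.mulVec x = b ∧ ∀ i, 0 ≤ x i} x)) hpmem' hqmem'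
        (le_of_lt (div_pos ht₂ hts)) (le_of_lt (div_pos ht₁ hts))
        (by rw [← add_div, add_comm]; exact div_self (ne_of_gt hts))
      rwa [hxc] at hfin

lemma stdform_nonneg {d : ℕ} {L : Set (Fin d → ℝ)} (hL : StdForm L) {w : Fin d → ℝ}
    (hw : w ∈ L) : ∀ j, 0 ≤ w j := by
  obtain ⟨-, k, A, b, rfl⟩ := hL; exact hw.2

lemma stdform_convex' {d k : ℕ} (A : Matrix (Fin k) (Fin d) ℝ) (b : Fin k → ℝ) :
    Convex ℝ {x : Fin d → ℝ | A.mulVec x = b ∧ ∀ i, 0 ≤ x i} := by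
  intro u hu w hw a c ha hc hac
  refine ⟨?_, fun i => ?_⟩
  · rw [Matrix.mulVec_add, Matrix.mulVec_smul, Matrix.mulVec_smul, hu.1, hw.1, ← add_smul,
      hac, one_smul]
  · simp only [Pi.add_apply, Pi.smul_apply, smul_eq_mul]
    exact add_nonneg (mul_nonneg ha (hu.2 i)) (mul_nonneg hc (hw.2 i))

lemma hull_Vsupp_subset {d : ℕ} {L : Set (Fin d → ℝ)} (hL : StdForm L) (x : Fin d → ℝ) :
    convexHull ℝ (Vsupp L x) ⊆ {w | w ∈ L ∧ ∀ j, x j = 0 → w j = 0} := by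
  obtain ⟨-, k, A, b, rfl⟩ := hL
  apply convexHull_min
  · rintro w ⟨hw, hsupp⟩
    exact ⟨extremePoints_subset hw, supp_subset_iff.mp hsupp⟩
  · intro u hu w hw a c ha hc hac
    refine ⟨stdform_convex' A b hu.1 hw.1 ha hc hac, fun j hj => ?_⟩
    simp [hu.2 j hj, hw.2 j hj]

lemma stdform_perturb {d : ℕ} {L : Set (Fin d → ℝ)} (hL : StdForm L) {u w : Fin d → ℝ}
    (hu : u ∈ L) (hw : w ∈ L) (t : ℝ)
    (hcoord : ∀ j, 0 ≤ u j + t * (u j - w j)) : u + t • (u - w) ∈ L := by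
  obtain ⟨-, k, A, b, rfl⟩ := hL
  refine ⟨?_, fun j => by simpa using hcoord j⟩
  rw [Matrix.mulVec_add, Matrix.mulVec_smul, Matrix.mulVec_sub, hu.1, hw.1, sub_self,
    smul_zero, add_zero]

theorem stmt_6 {n e : ℕ} (d : Fin n → ℕ)
    (L : ∀ i, Set (Fin (d i) → ℝ)) (hL : ∀ i, StdForm (L i))
    (M : Set (Fin e → ℝ)) (hM : IsPolytope M)
    (f : ∀ i, (Fin (d i) → ℝ) →ᵃ[ℝ] (Fin e → ℝ))
    (hf : ∀ i, ∀ y ∈ L i, f i y ∈ M)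
    (x : ∀ i, Fin (d i) → ℝ) (hx : x ∈ FiberProd d L f) :
    x ∈ Set.extremePoints ℝ (FiberProd d L f) ↔
      {y : ∀ i, Fin (d i) → ℝ |
        (∀ i, y i ∈ convexHull ℝ (Vsupp (L i) (x i))) ∧
          ∀ i j, f i (y i) = f j (y j)} = {x} := by
  classical
  constructor
  · intro hext
    apply Set.eq_singleton_iff_unique_mem.mpr
    refine ⟨⟨fun i => mem_convexHull_Vsupp (hL i) (hx.1 i), hx.2⟩, ?_⟩
    intro y hy
    by_contra hyx
    have hyL : ∀ i, y i ∈ L i ∧ ∀ j, x i j = 0 → y i j = 0 :=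
      fun i => hull_Vsupp_subset (hL i) (x i) (hy.1 i)
    have hxnn : ∀ i j, 0 ≤ x i j := fun i => stdform_nonneg (hL i) (hx.1 i)
    -- choose a positive step size t
    obtain ⟨t, ht, htle⟩ : ∃ t : ℝ, 0 < t ∧
        ∀ (i : Fin n) (j : Fin (d i)), x i j < y i j → t * (y i j - x i j) ≤ x i j := by
      set Bad : Finset ((i : Fin n) × Fin (d i)) :=
        Finset.univ.filter (fun p => x p.1 p.2 < y p.1 p.2) with hBadDef
      rcases Bad.eq_empty_or_nonempty with hBE | hBN
      · refine ⟨1, one_pos, fun i j hij => ?_⟩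
        exfalso
        have hmem : (⟨i, j⟩ : (i : Fin n) × Fin (d i)) ∈ Bad := by
          simp [hBadDef, hij]
        rw [hBE] at hmem
        exact Finset.notMem_empty _ hmem
      · obtain ⟨ps, hps, hmin⟩ := Finset.exists_min_image Bad
          (fun p => x p.1 p.2 / (y p.1 p.2 - x p.1 p.2)) hBN
        rw [hBadDef, Finset.mem_filter] at hps
        have hlt : x ps.1 ps.2 < y ps.1 ps.2 := hps.2
        have hxpos : 0 < x ps.1 ps.2 := by
          rcases lt_or_eq_of_le (hxnn ps.1 ps.2) with h | h
          · exact h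
          · exfalso
            have hy0 := (hyL ps.1).2 ps.2 h.symm
            rw [hy0, ← h] at hlt
            exact lt_irrefl _ hlt
        refine ⟨x ps.1 ps.2 / (y ps.1 ps.2 - x ps.1 ps.2),
          div_pos hxpos (by linarith), fun i j hij => ?_⟩
        have hmem : (⟨i, j⟩ : (i : Fin n) × Fin (d i)) ∈ Bad := by
          simp [hBadDef, hij]
        calc x ps.1 ps.2 / (y ps.1 ps.2 - x ps.1 ps.2) * (y i j - x i j)
            ≤ x i j / (y i j - x i j) * (y i j - x i j) := by
              apply mul_le_mul_of_nonneg_right (hmin _ hmem)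
              linarith
          _ = x i j := div_mul_cancel₀ _ (by linarith)
    -- the reflected point z
    set z : ∀ i, Fin (d i) → ℝ := x + t • (x - y) with hzdef
    have hzi : ∀ i, z i = x i + t • (x i - y i) := fun i => rfl
    have hzL : ∀ i, z i ∈ L i := by
      intro i
      rw [hzi]
      apply stdform_perturb (hL i) (hx.1 i) (hyL i).1 t
      intro j
      rcases lt_or_ge (x i j) (y i j) with h | h
      · have := htle i j h
        nlinarith
      · nlinarith [hxnn i j]
    have hzP : z ∈ FiberProd d L f := by
      refine ⟨hzL, fun i j => ?_⟩
      have hlm : ∀ i, z i = AffineMap.lineMap (y i) (x i) (1 + t) := by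
        intro i
        rw [AffineMap.lineMap_apply_module', hzi]
        module
      rw [hlm i, hlm j, AffineMap.apply_lineMap, AffineMap.apply_lineMap,
        hx.2 i j, hy.2 i j]
    have hyP : y ∈ FiberProd d L f := ⟨fun i => (hyL i).1, hy.2⟩
    have h1t : (0:ℝ) < 1 + t := by linarith
    have hseg : x ∈ openSegment ℝ y z := by
      refine ⟨t / (1 + t), 1 / (1 + t), div_pos ht h1t, div_pos one_pos h1t, ?_, ?_⟩
      · field_simp
        ring
      · rw [hzdef]
        match_scalars <;> field_simp <;> ring
    rw [mem_extremePoints] at hext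
    exact hyx (hext.2 y hyP z hzP hseg).1
  · intro hS
    refine ⟨hx, fun y hy z hz hseg => ?_⟩
    obtain ⟨a, c, ha, hc, hac, habc⟩ := hseg
    have hzero : ∀ (i : Fin n) (j : Fin (d i)), x i j = 0 → y i j = 0 ∧ z i j = 0 := by
      intro i j hj
      have h := congrFun (congrFun habc i) j
      simp only [Pi.add_apply, Pi.smul_apply, smul_eq_mul] at h
      rw [hj] at h
      have h1 : 0 ≤ y i j := stdform_nonneg (hL i) (hy.1 i) j
      have h2 : 0 ≤ z i j := stdform_nonneg (hL i) (hz.1 i) j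
      constructor
      · nlinarith
      · nlinarith
    have key : ∀ w ∈ FiberProd d L f,
        (∀ (i : Fin n) (j : Fin (d i)), x i j = 0 → w i j = 0) → w = x := by
      intro w hw hsw
      have hwS : w ∈ {y : ∀ i, Fin (d i) → ℝ |
          (∀ i, y i ∈ convexHull ℝ (Vsupp (L i) (x i))) ∧
            ∀ i j, f i (y i) = f j (y j)} := by
        refine ⟨fun i => ?_, hw.2⟩
        exact convexHull_mono (Vsupp_mono _ (supp_subset_iff.mpr (hsw i)))
          (mem_convexHull_Vsupp (hL i) (hw.1 i))
      rw [hS] at hwS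
      exact hwS
    exact key y hy (fun i j hj => (hzero i j hj).1)
end

section
/- Let x = (x⁽¹⁾, …, x⁽ⁿ⁾) be a point of the fiber product L⁽¹⁾ ×_M ⋯ ×_M L⁽ⁿ⁾ of polytopes in standard form, and for each i set A_i := f_i(Vsupp(x⁽ⁱ⁾)). Suppose that for every i the map f_i is injective on Vsupp(x⁽ⁱ⁾) and the set A_i is affinely independent, and that the intersection ⋂_{i=1}^n Conv(A_i) consists of a single point. Then x is an extreme point of the fiber product. -/
lemma injOn_hull {d e : ℕ} (f : (Fin d → ℝ) →ᵃ[ℝ] (Fin e → ℝ)) (s : Set (Fin d → ℝ))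
    (hinj : Set.InjOn f s)
    (haff : AffineIndependent ℝ ((↑) : (f '' s) → (Fin e → ℝ))) :
    Set.InjOn f (convexHull ℝ s) := by
  have hai : AffineIndependent ℝ (f ∘ ((↑) : s → (Fin d → ℝ))) := by
    have := haff.comp_embedding
      (⟨fun v : s => (⟨f v, Set.mem_image_of_mem f v.2⟩ : f '' s),
        fun a b hab => Subtype.ext (hinj a.2 b.2 (congrArg Subtype.val hab))⟩ : s ↪ f '' s)
    exact this
  intro p hp q hq hpq
  rw [← Subtype.range_coe (s := s), convexHull_range_eq_exists_affineCombination] at hp hq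
  obtain ⟨t, w, hw0, hw1, rfl⟩ := hp
  obtain ⟨t', w', hw0', hw1', rfl⟩ := hq
  rw [Finset.map_affineCombination t _ w hw1 f, Finset.map_affineCombination t' _ w' hw1' f] at hpq
  have hind := hai.indicator_eq_of_affineCombination_eq t t' w w' hw1 hw1' hpq
  rw [Finset.affineCombination_indicator_subset w _ (Finset.subset_union_left (s₂ := t')),
    Finset.affineCombination_indicator_subset w' _ (Finset.subset_union_right (s₁ := t)), hind]

lemma supp_iff {d : ℕ} (w x : Fin d → ℝ) : supp w ⊆ supp x ↔ ∀ j, x j = 0 → w j = 0 := by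
  constructor
  · intro h j hj
    by_contra hw
    exact (h hw) hj
  · intro h j hj hxj
    exact hj (h j hxj)

lemma face_subset_hull {d : ℕ} {L : Set (Fin d → ℝ)} (hL : StdForm L)
    {x : Fin d → ℝ} (hfin : (Vsupp L x).Finite) :
    {w ∈ L | supp w ⊆ supp x} ⊆ convexHull ℝ (Vsupp L x) := by
  obtain ⟨hbdd, k, A, b, hrep⟩ := hL
  set F : Set (Fin d → ℝ) := {w ∈ L | supp w ⊆ supp x} with hF
  have hnonneg : ∀ w ∈ L, ∀ j, 0 ≤ w j := by
    intro w hw j; rw [hrep] at hw; exact hw.2 j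
  have hLclosed : IsClosed L := by
    rw [hrep]
    have h1 : IsClosed {w : Fin d → ℝ | A.mulVec w = b} := by
      have hc : Continuous fun w : Fin d → ℝ => A.mulVec w := by
        have := A.mulVecLin.continuous_of_finiteDimensional
        exact this
      exact isClosed_eq hc continuous_const
    have h2 : IsClosed {w : Fin d → ℝ | ∀ j, 0 ≤ w j} := by
      have : {w : Fin d → ℝ | ∀ j, 0 ≤ w j} = ⋂ j, {w | 0 ≤ w j} := by ext; simp
      rw [this]
      exact isClosed_iInter fun j => isClosed_le continuous_const (continuous_apply j)
    exact (Set.setOf_and (p := fun w => A.mulVec w = b)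
      (q := fun w => ∀ j, 0 ≤ w j)) ▸ h1.inter h2
  have hFclosed : IsClosed F := by
    have h3 : IsClosed {w : Fin d → ℝ | ∀ j, x j = 0 → w j = 0} := by
      have : {w : Fin d → ℝ | ∀ j, x j = 0 → w j = 0}
          = ⋂ j, {w | x j = 0 → w j = 0} := by ext; simp
      rw [this]
      refine isClosed_iInter fun j => ?_
      by_cases hxj : x j = 0
      · simp only [hxj, forall_true_left]
        exact isClosed_eq (continuous_apply j) continuous_const
      · simp only [hxj]
        simp [Set.setOf_true]
    have : F = L ∩ {w : Fin d → ℝ | ∀ j, x j = 0 → w j = 0} := by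
      ext w; simp only [hF, Set.mem_setOf_eq, Set.mem_inter_iff, Set.mem_sep_iff, supp_iff]
    rw [this]
    exact hLclosed.inter h3
  have hFcomp : IsCompact F := Metric.isCompact_of_isClosed_isBounded hFclosed
    (hbdd.subset (Set.sep_subset _ _))
  have hLconv : Convex ℝ L := by
    rw [hrep]
    intro p hp q hq a c ha hc hac
    refine ⟨?_, fun j => ?_⟩
    · rw [Matrix.mulVec_add, Matrix.mulVec_smul, Matrix.mulVec_smul, hp.1, hq.1,
        ← add_smul, hac, one_smul]
    · have := hp.2 j; have := hq.2 j
      have : (a • p + c • q) j = a * p j + c * q j := rfl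
      rw [this]
      positivity
  have hFconv : Convex ℝ F := by
    intro p hp q hq a c ha hc hac
    refine ⟨hLconv hp.1 hq.1 ha hc hac, (supp_iff _ _).2 fun j hj => ?_⟩
    have hp0 : p j = 0 := (supp_iff _ _).1 hp.2 j hj
    have hq0 : q j = 0 := (supp_iff _ _).1 hq.2 j hj
    show a * p j + c * q j = 0
    rw [hp0, hq0]; ring
  have hE : F.extremePoints ℝ ⊆ Vsupp L x := by
    intro w hw
    rw [mem_extremePoints] at hw
    obtain ⟨⟨hwL, hwsupp⟩, hwext⟩ := hw
    refine ⟨?_, hwsupp⟩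
    rw [mem_extremePoints]
    refine ⟨hwL, fun p hp q hq hseg => ?_⟩
    obtain ⟨a, c, ha, hc, hac, hw'⟩ := hseg
    have hmem : p ∈ F ∧ q ∈ F := by
      have key : ∀ j, x j = 0 → p j = 0 ∧ q j = 0 := by
        intro j hj
        have hw0 : w j = 0 := (supp_iff _ _).1 hwsupp j hj
        have h1 : a * p j + c * q j = 0 := by
          have : (a • p + c • q) j = w j := by rw [hw']
          simpa using this.trans hw0
        have hpj := hnonneg p hp j
        have hqj := hnonneg q hq j
        constructor <;> nlinarith
      exact ⟨⟨hp, (supp_iff _ _).2 fun j hj => (key j hj).1⟩,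
        ⟨hq, (supp_iff _ _).2 fun j hj => (key j hj).2⟩⟩
    exact hwext p hmem.1 q hmem.2 ⟨a, c, ha, hc, hac, hw'⟩
  have hKM := closure_convexHull_extremePoints hFcomp hFconv
  intro w hw
  have h1 : w ∈ closure (convexHull ℝ (F.extremePoints ℝ)) := hKM.symm ▸ hw
  exact closure_minimal (convexHull_mono hE) (hfin.isCompact_convexHull (𝕜 := ℝ)).isClosed h1

theorem stmt_7 {n e : ℕ} (d : Fin n → ℕ)
    (L : ∀ i, Set (Fin (d i) → ℝ)) (hL : ∀ i, StdForm (L i))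
    (M : Set (Fin e → ℝ)) (hM : IsPolytope M)
    (f : ∀ i, (Fin (d i) → ℝ) →ᵃ[ℝ] (Fin e → ℝ))
    (hf : ∀ i, ∀ y ∈ L i, f i y ∈ M)
    (x : ∀ i, Fin (d i) → ℝ) (hx : x ∈ FiberProd d L f)
    (hinj : ∀ i, Set.InjOn (f i) (Vsupp (L i) (x i)))
    (haff : ∀ i, AffineIndependent ℝ
      ((↑) : (f i '' Vsupp (L i) (x i)) → (Fin e → ℝ)))
    (hint : ∃ u, (⋂ i, convexHull ℝ (f i '' Vsupp (L i) (x i))) = {u}) :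
    x ∈ Set.extremePoints ℝ (FiberProd d L f) := by
  rw [mem_extremePoints]
  refine ⟨hx, ?_⟩
  intro y hy z hz hseg
  obtain ⟨a, c, ha, hc, hac, hxyz⟩ := hseg
  obtain ⟨u, hu⟩ := hint
  have hVfin : ∀ i, (Vsupp (L i) (x i)).Finite := fun i =>
    Set.Finite.of_finite_image
      (finite_set_of_fin_dim_affineIndependent ℝ (haff i)) (hinj i)
  have hnonneg : ∀ i, ∀ w ∈ L i, ∀ j, 0 ≤ w j := by
    intro i w hw j
    obtain ⟨-, k, A, b, hrep⟩ := hL i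
    rw [hrep] at hw
    exact hw.2 j
  have hcoord : ∀ i j, a * y i j + c * z i j = x i j := by
    intro i j
    have : (a • y + c • z) i j = x i j := by rw [hxyz]
    simpa using this
  have hyhull : ∀ i, y i ∈ convexHull ℝ (Vsupp (L i) (x i)) := by
    intro i
    refine face_subset_hull (hL i) (hVfin i) ⟨hy.1 i, (supp_iff _ _).2 fun j hj => ?_⟩
    have h1 := hcoord i j
    rw [hj] at h1
    have := hnonneg i (y i) (hy.1 i) j
    have := hnonneg i (z i) (hz.1 i) j
    nlinarith
  have hzhull : ∀ i, z i ∈ convexHull ℝ (Vsupp (L i) (x i)) := by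
    intro i
    refine face_subset_hull (hL i) (hVfin i) ⟨hz.1 i, (supp_iff _ _).2 fun j hj => ?_⟩
    have h1 := hcoord i j
    rw [hj] at h1
    have := hnonneg i (y i) (hy.1 i) j
    have := hnonneg i (z i) (hz.1 i) j
    nlinarith
  have hxhull : ∀ i, x i ∈ convexHull ℝ (Vsupp (L i) (x i)) := fun i =>
    face_subset_hull (hL i) (hVfin i) ⟨hx.1 i, fun _ hj => hj⟩
  have himg : ∀ (w : ∀ i, Fin (d i) → ℝ), w ∈ FiberProd d L f →
      (∀ i, w i ∈ convexHull ℝ (Vsupp (L i) (x i))) → ∀ i, f i (w i) = u := by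
    intro w hw hwh i
    have : f i (w i) ∈ ⋂ j, convexHull ℝ (f j '' Vsupp (L j) (x j)) := by
      refine Set.mem_iInter.2 fun j => ?_
      rw [hw.2 i j, ← AffineMap.image_convexHull]
      exact Set.mem_image_of_mem _ (hwh j)
    rw [hu] at this
    exact this
  have hyu := himg y hy hyhull
  have hzu := himg z hz hzhull
  have hxu := himg x hx hxhull
  constructor
  · funext i
    exact injOn_hull (f i) _ (hinj i) (haff i) (hyhull i) (hxhull i)
      ((hyu i).trans (hxu i).symm)
  · funext i
    exact injOn_hull (f i) _ (hinj i) (haff i) (hzhull i) (hxhull i)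
      ((hzu i).trans (hxu i).symm)
end

section
/- Let L⁽¹⁾, …, L⁽ⁿ⁾ be polytopes in standard form and f_i : ℝ^{d_i} → ℝ^e affine maps with f_i(L⁽ⁱ⁾) ⊆ M for a polytope M. Suppose A₁, …, Aₙ ⊆ M are sets such that: each A_i is affinely independent; ⋂_{i=1}^n Conv(A_i) consists of exactly one point u; and for each i there is a finite set Ã_i of extreme points of L⁽ⁱ⁾ whose convex hull is an exposed face of L⁽ⁱ⁾ such that f_i restricted to Ã_i is a bijection onto A_i. For each j, let (α_z)_{z∈A_j} be nonnegative reals summing to 1 with u = Σ_{z∈A_j} α_z z, and define x⁽ʲ⁾ := Σ_{y∈Ã_j} α_{f_j(y)} y. Then x = (x⁽¹⁾, …, x⁽ⁿ⁾) lies in the fiber product L⁽¹⁾ ×_M ⋯ ×_M L⁽ⁿ⁾ and is an extreme point of it. -/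
lemma stdForm_convex {d : ℕ} {L : Set (Fin d → ℝ)} (h : StdForm L) : Convex ℝ L := by
  obtain ⟨-, k, A, b, rfl⟩ := h
  intro p hp q hq s t hs ht hst
  refine ⟨?_, fun i => ?_⟩
  · rw [Matrix.mulVec_add, Matrix.mulVec_smul, Matrix.mulVec_smul, hp.1, hq.1, ← add_smul, hst,
      one_smul]
  · have h1 := hp.2 i
    have h2 := hq.2 i
    have : (s • p + t • q) i = s * p i + t * q i := rfl
    rw [this]
    exact add_nonneg (mul_nonneg hs h1) (mul_nonneg ht h2)

lemma key_unique {d e : ℕ} (f : (Fin d → ℝ) →ᵃ[ℝ] (Fin e → ℝ))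
    (Atil : Finset (Fin d → ℝ)) (A : Finset (Fin e → ℝ))
    (hbij : Set.BijOn f ↑Atil ↑A)
    (haff : AffineIndependent ℝ ((↑) : ↑(A : Set (Fin e → ℝ)) → (Fin e → ℝ)))
    (α : (Fin e → ℝ) → ℝ) (hα1 : ∑ z ∈ A, α z = 1) (u : Fin e → ℝ)
    (hαu : ∑ z ∈ A, α z • z = u)
    (a : Fin d → ℝ) (ha : a ∈ convexHull ℝ (↑Atil : Set (Fin d → ℝ)))
    (hfa : f a = u) :
    a = ∑ y ∈ Atil, α (f y) • y := by
  classical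
  have himg : Atil.image f = A :=
    Finset.coe_injective (by rw [Finset.coe_image]; exact hbij.image_eq)
  have hinj : ∀ p ∈ Atil, ∀ q ∈ Atil, f p = f q → p = q :=
    fun p hp q hq h => hbij.injOn hp hq h
  rw [Finset.convexHull_eq] at ha
  obtain ⟨β, hβ0, hβ1, hβa⟩ := ha
  have haeq : a = ∑ y ∈ Atil, β y • y := by
    rw [← hβa, Finset.centerMass_eq_of_sum_1 _ _ hβ1]
    rfl
  set g : (Fin e → ℝ) → (Fin d → ℝ) := Function.invFunOn f ↑Atil with hg
  have hgf : ∀ y ∈ Atil, g (f y) = y := fun y hy => hbij.injOn.leftInvOn_invFunOn hy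
  have hfa' : f a = ∑ y ∈ Atil, β y • f y := by
    have h1 : Atil.affineCombination ℝ _root_.id β = a := by
      rw [Finset.affineCombination_eq_linear_combination _ _ _ hβ1]
      exact haeq.symm
    rw [← h1, Finset.map_affineCombination _ _ _ hβ1 f,
      Finset.affineCombination_eq_linear_combination _ _ _ hβ1]
    rfl
  set S : Set (Fin e → ℝ) := ↑A with hS
  have hmemiff : ∀ z, z ∈ A ↔ z ∈ S := fun z => Iff.rfl
  set w1 : S → ℝ := fun z => α ↑z with hw1
  set w2 : S → ℝ := fun z => β (g ↑z) with hw2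
  have hre1 : ∀ (G : (Fin e → ℝ) → ℝ), ∑ z ∈ A, G z = ∑ y ∈ Atil, G (f y) := fun G => by
    rw [← himg]; exact Finset.sum_image hinj
  have hre2 : ∀ (G : (Fin e → ℝ) → (Fin e → ℝ)), ∑ z ∈ A, G z = ∑ y ∈ Atil, G (f y) :=
    fun G => by rw [← himg]; exact Finset.sum_image hinj
  have hw1sum : ∑ z : S, w1 z = 1 := by
    rw [← Finset.sum_subtype A hmemiff α]; exact hα1
  have hw2sum : ∑ z : S, w2 z = 1 := by
    rw [← Finset.sum_subtype A hmemiff (fun z => β (g z))]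
    rw [hre1 (fun z => β (g z))]
    rw [Finset.sum_congr rfl fun y hy => by rw [hgf y hy]]
    exact hβ1
  have hw1comb : Finset.univ.affineCombination ℝ (Subtype.val : S → (Fin e → ℝ)) w1 = u := by
    rw [Finset.affineCombination_eq_linear_combination _ _ _ hw1sum]
    rw [← Finset.sum_subtype A hmemiff (fun z => α z • z)]
    exact hαu
  have hw2comb : Finset.univ.affineCombination ℝ (Subtype.val : S → (Fin e → ℝ)) w2 = u := by
    rw [Finset.affineCombination_eq_linear_combination _ _ _ hw2sum]
    rw [← Finset.sum_subtype A hmemiff (fun z => β (g z) • z)]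
    rw [hre2 (fun z => β (g z) • z)]
    rw [Finset.sum_congr rfl fun y hy => by rw [hgf y hy]]
    rw [← hfa']
    exact hfa
  have hind := haff.indicator_eq_of_affineCombination_eq Finset.univ Finset.univ w1 w2
    hw1sum hw2sum (hw1comb.trans hw2comb.symm)
  have hw12 : ∀ z : S, α (z : Fin e → ℝ) = β (g ↑z) := fun z => by
    have := congrFun hind z
    simpa [Set.indicator_univ] using this
  rw [haeq]
  refine Finset.sum_congr rfl fun y hy => ?_
  have hz : f y ∈ A := hbij.mapsTo hy
  have := hw12 ⟨f y, hz⟩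
  rw [hgf y hy] at this
  rw [this]

theorem stmt_8 {n e : ℕ} (d : Fin n → ℕ)
    (L : ∀ i, Set (Fin (d i) → ℝ)) (hL : ∀ i, StdForm (L i))
    (M : Set (Fin e → ℝ)) (hM : IsPolytope M)
    (f : ∀ i, (Fin (d i) → ℝ) →ᵃ[ℝ] (Fin e → ℝ))
    (hf : ∀ i, ∀ y ∈ L i, f i y ∈ M)
    (A : Fin n → Finset (Fin e → ℝ)) (hAM : ∀ i, ↑(A i) ⊆ M)
    (haff : ∀ i, AffineIndependent ℝ ((↑) : ↑(A i : Set (Fin e → ℝ)) → (Fin e → ℝ)))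
    (u : Fin e → ℝ) (hu : (⋂ i, convexHull ℝ (A i : Set (Fin e → ℝ))) = {u})
    (Atil : ∀ i, Finset (Fin (d i) → ℝ))
    (hAtilext : ∀ i, ↑(Atil i) ⊆ Set.extremePoints ℝ (L i))
    (hface : ∀ i, IsExposed ℝ (L i) (convexHull ℝ ↑(Atil i)))
    (hbij : ∀ i, Set.BijOn (f i) ↑(Atil i) ↑(A i))
    (α : ∀ _ : Fin n, (Fin e → ℝ) → ℝ)
    (hα0 : ∀ i, ∀ z ∈ A i, 0 ≤ α i z)
    (hα1 : ∀ i, ∑ z ∈ A i, α i z = 1)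
    (hαu : ∀ i, ∑ z ∈ A i, α i z • z = u)
    (x : ∀ i, Fin (d i) → ℝ)
    (hxdef : ∀ i, x i = ∑ y ∈ Atil i, α i (f i y) • y) :
    x ∈ FiberProd d L f ∧ x ∈ Set.extremePoints ℝ (FiberProd d L f) := by
  classical
  have himg : ∀ i, (Atil i).image (f i) = A i := fun i =>
    Finset.coe_injective (by rw [Finset.coe_image]; exact (hbij i).image_eq)
  have hinj : ∀ i, ∀ p ∈ Atil i, ∀ q ∈ Atil i, f i p = f i q → p = q :=
    fun i p hp q hq h => (hbij i).injOn hp hq h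
  have hsum1 : ∀ i, ∑ y ∈ Atil i, α i (f i y) = 1 := fun i => by
    have : ∑ z ∈ A i, α i z = ∑ y ∈ Atil i, α i (f i y) := by
      rw [← himg i]; exact Finset.sum_image (hinj i)
    rw [← this]; exact hα1 i
  have hsumu : ∀ i, ∑ y ∈ Atil i, α i (f i y) • f i y = u := fun i => by
    have : ∑ z ∈ A i, α i z • z = ∑ y ∈ Atil i, α i (f i y) • f i y := by
      rw [← himg i]; exact Finset.sum_image (hinj i)
    rw [← this]; exact hαu i
  -- x i lies in the convex hull of Atil i
  have hxconv : ∀ i, x i ∈ convexHull ℝ (↑(Atil i) : Set (Fin (d i) → ℝ)) := fun i => by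
    have hx_eq : (Atil i).centerMass (fun y => α i (f i y)) _root_.id = x i := by
      rw [Finset.centerMass_eq_of_sum_1 _ _ (hsum1 i), hxdef i]
      rfl
    rw [← hx_eq]
    refine Finset.centerMass_mem_convexHull _ (fun y hy => ?_) (by rw [hsum1 i]; exact one_pos)
      (fun y hy => hy)
    exact hα0 i _ ((hbij i).mapsTo hy)
  -- L i contains the hull
  have hhullL : ∀ i, convexHull ℝ (↑(Atil i) : Set (Fin (d i) → ℝ)) ⊆ L i := fun i =>
    convexHull_min (fun y hy => ((hAtilext i) hy).1) (stdForm_convex (hL i))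
  have hxL : ∀ i, x i ∈ L i := fun i => hhullL i (hxconv i)
  -- f i (x i) = u
  have hfx : ∀ i, f i (x i) = u := fun i => by
    have hcomb : (Atil i).affineCombination ℝ _root_.id (fun y => α i (f i y)) = x i := by
      rw [Finset.affineCombination_eq_linear_combination _ _ _ (hsum1 i), hxdef i]
      rfl
    rw [← hcomb, Finset.map_affineCombination _ _ _ (hsum1 i) (f i),
      Finset.affineCombination_eq_linear_combination _ _ _ (hsum1 i)]
    exact hsumu i
  have hmem : x ∈ FiberProd d L f := ⟨hxL, fun i j => (hfx i).trans (hfx j).symm⟩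
  refine ⟨hmem, hmem, ?_⟩
  intro p hp q hq hseg
  obtain ⟨t, s, ht, hs, hts, hx⟩ := hseg
  have hcomp : ∀ i, x i ∈ openSegment ℝ (p i) (q i) := fun i =>
    ⟨t, s, ht, hs, hts, by rw [← hx]; rfl⟩
  have hF : ∀ i, p i ∈ convexHull ℝ (↑(Atil i) : Set (Fin (d i) → ℝ)) ∧
      q i ∈ convexHull ℝ (↑(Atil i) : Set (Fin (d i) → ℝ)) := fun i =>
    ⟨((hface i).isExtreme).left_mem_of_mem_openSegment (hp.1 i) (hq.1 i) (hxconv i) (hcomp i),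
      ((hface i).isExtreme).left_mem_of_mem_openSegment (hq.1 i) (hp.1 i) (hxconv i)
        (by rw [openSegment_symm]; exact hcomp i)⟩
  -- images equal u
  have himgu : ∀ (r : ∀ i, Fin (d i) → ℝ), r ∈ FiberProd d L f →
      (∀ i, r i ∈ convexHull ℝ (↑(Atil i) : Set (Fin (d i) → ℝ))) →
      ∀ i, f i (r i) = u := by
    intro r hr hrF i
    have hmemI : f i (r i) ∈ ⋂ j, convexHull ℝ (↑(A j) : Set (Fin e → ℝ)) := by
      refine Set.mem_iInter.2 fun j => ?_
      rw [hr.2 i j]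
      have : f j (r j) ∈ (f j) '' (convexHull ℝ (↑(Atil j) : Set (Fin (d j) → ℝ))) :=
        Set.mem_image_of_mem _ (hrF j)
      rwa [AffineMap.image_convexHull, (hbij j).image_eq] at this
    rw [hu] at hmemI
    exact hmemI
  have hpu := himgu p hp (fun i => (hF i).1)
  have hqu := himgu q hq (fun i => (hF i).2)
  · funext i
    rw [key_unique (f i) (Atil i) (A i) (hbij i) (haff i) (α i) (hα1 i) u (hαu i)
      (p i) (hF i).1 (hpu i), hxdef i]
end

section
/- Let x = (x⁽¹⁾, …, x⁽ⁿ⁾) be an extreme point of the fiber product L⁽¹⁾ ×_M ⋯ ×_M L⁽ⁿ⁾ of polytopes in standard form, and suppose that for some index j the set Vsupp(x⁽ʲ⁾) is affinely independent. Then f_j is injective on Vsupp(x⁽ʲ⁾) (so |f_j(Vsupp(x⁽ʲ⁾))| = |Vsupp(x⁽ʲ⁾)|) and the set A_j := f_j(Vsupp(x⁽ʲ⁾)) is affinely independent. -/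
/-- Key perturbation lemma: if `w` is in the kernel of the constraint matrix at `j`,
in the kernel of the linear part of `f j`, and supported in `supp (x j)`, then
extremality of `x` forces `w = 0`. -/
lemma perturb_eq_zero {n e : ℕ} {d : Fin n → ℕ} {L : ∀ i, Set (Fin (d i) → ℝ)}
    {f : ∀ i, (Fin (d i) → ℝ) →ᵃ[ℝ] (Fin e → ℝ)}
    {x : ∀ i, Fin (d i) → ℝ}
    (hxv : x ∈ Set.extremePoints ℝ (FiberProd d L f))
    {j : Fin n} {k : ℕ} {A : Matrix (Fin k) (Fin (d j)) ℝ} {b : Fin k → ℝ}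
    (hLj : L j = {y | A.mulVec y = b ∧ ∀ i, 0 ≤ y i})
    {w : Fin (d j) → ℝ}
    (hAw : A.mulVec w = 0)
    (hfw : (f j).linear w = 0)
    (hsupp : ∀ i, x j i = 0 → w i = 0) :
    w = 0 := by
  classical
  obtain ⟨hxF, hext⟩ := hxv
  obtain ⟨hxL, hxf⟩ := hxF
  have hxj : A.mulVec (x j) = b ∧ ∀ i, 0 ≤ x j i := by
    have := hxL j; rw [hLj] at this; exact this
  obtain ⟨hAx, hpos⟩ := hxj
  -- choose a small positive t
  obtain ⟨t, ht, htw⟩ : ∃ t > (0:ℝ), ∀ i, t * |w i| ≤ x j i := by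
    set S := Finset.univ.filter (fun i => x j i ≠ 0) with hS
    by_cases hSne : S.Nonempty
    · refine ⟨S.inf' hSne (fun i => x j i / (|w i| + 1)), ?_, ?_⟩
      · rw [gt_iff_lt, Finset.lt_inf'_iff]
        intro i hi
        have hxi : x j i ≠ 0 := by simpa [hS] using hi
        have : 0 < x j i := lt_of_le_of_ne (hpos i) (Ne.symm hxi)
        positivity
      · intro i
        by_cases hxi : x j i = 0
        · rw [hsupp i hxi, hxi]; simp
        · have hi : i ∈ S := by simp [hS, hxi]
          have h1 : S.inf' hSne (fun i => x j i / (|w i| + 1)) ≤ x j i / (|w i| + 1) :=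
            Finset.inf'_le _ hi
          have hwpos : (0:ℝ) < |w i| + 1 := by positivity
          have hxpos : 0 < x j i := lt_of_le_of_ne (hpos i) (Ne.symm hxi)
          calc S.inf' hSne (fun i => x j i / (|w i| + 1)) * |w i|
              ≤ (x j i / (|w i| + 1)) * |w i| :=
                mul_le_mul_of_nonneg_right h1 (abs_nonneg _)
            _ ≤ (x j i / (|w i| + 1)) * (|w i| + 1) := by
                have : (0:ℝ) ≤ x j i / (|w i| + 1) := by positivity
                nlinarith [abs_nonneg (w i)]
            _ = x j i := div_mul_cancel₀ _ (ne_of_gt hwpos)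
    · refine ⟨1, one_pos, fun i => ?_⟩
      have hxi : x j i = 0 := by
        by_contra h
        exact hSne ⟨i, by simp [hS, h]⟩
      rw [hsupp i hxi, hxi]; simp
  -- the perturbed points are in the fiber product
  have hup : ∀ s : ℝ, |s| ≤ t → Function.update x j (x j + s • w) ∈ FiberProd d L f := by
    intro s hs
    have hval : ∀ i, f i (Function.update x j (x j + s • w) i) = f i (x i) := by
      intro i
      by_cases hij : i = j
      · rw [hij, Function.update_self]
        show f j (x j + s • w) = f j (x j)
        rw [add_comm, ← vadd_eq_add, AffineMap.map_vadd, LinearMap.map_smul, hfw,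
          smul_zero, vadd_eq_add, zero_add]
      · rw [Function.update_of_ne hij]
    constructor
    · intro i
      by_cases hij : i = j
      · rw [hij, Function.update_self, hLj]
        refine ⟨?_, ?_⟩
        · rw [Matrix.mulVec_add, Matrix.mulVec_smul, hAw, smul_zero, add_zero, hAx]
        · intro i2
          have h1 : |s * w i2| ≤ t * |w i2| := by
            rw [abs_mul]
            exact mul_le_mul_of_nonneg_right hs (abs_nonneg _)
          have h2 := (abs_le.mp (h1.trans (htw i2))).1
          have : (x j + s • w) i2 = x j i2 + s * w i2 := rfl
          rw [this]; linarith
      · rw [Function.update_of_ne hij]; exact hxL i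
    · intro i1 i2
      rw [hval, hval]
      exact hxf i1 i2
  have hy := hup t (by rw [abs_of_pos ht])
  have hz := hup (-t) (by rw [abs_neg, abs_of_pos ht])
  have hseg : x ∈ openSegment ℝ (Function.update x j (x j + t • w))
      (Function.update x j (x j + (-t) • w)) := by
    refine ⟨1/2, 1/2, by norm_num, by norm_num, by norm_num, ?_⟩
    funext i
    by_cases hij : i = j
    · rw [hij]
      simp only [Pi.add_apply, Pi.smul_apply, Function.update_self]
      module
    · show (1/2 : ℝ) • (Function.update x j (x j + t • w) i)
        + (1/2 : ℝ) • (Function.update x j (x j + (-t) • w) i) = x i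
      rw [Function.update_of_ne hij, Function.update_of_ne hij]
      module
  have h1 : Function.update x j (x j + t • w) = x := hext hy hz hseg
  have h2 : x j + t • w = x j := by
    have := congrFun h1 j
    rwa [Function.update_self] at this
  have h3 : t • w = 0 := by
    have := congrArg (fun u => u - x j) h2
    simpa using this
  rcases smul_eq_zero.mp h3 with h | h
  · exact absurd h (ne_of_gt ht)
  · exact h

theorem stmt_9 {n e : ℕ} (d : Fin n → ℕ)
    (L : ∀ i, Set (Fin (d i) → ℝ)) (hL : ∀ i, StdForm (L i))
    (M : Set (Fin e → ℝ)) (hM : IsPolytope M)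
    (f : ∀ i, (Fin (d i) → ℝ) →ᵃ[ℝ] (Fin e → ℝ))
    (hf : ∀ i, ∀ y ∈ L i, f i y ∈ M)
    (x : ∀ i, Fin (d i) → ℝ) (hx : x ∈ FiberProd d L f)
    (hxv : x ∈ Set.extremePoints ℝ (FiberProd d L f))
    (j : Fin n)
    (haff : AffineIndependent ℝ ((↑) : Vsupp (L j) (x j) → (Fin (d j) → ℝ))) :
    Set.InjOn (f j) (Vsupp (L j) (x j)) ∧
      AffineIndependent ℝ ((↑) : (f j '' Vsupp (L j) (x j)) → (Fin e → ℝ)) := by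
  classical
  obtain ⟨-, k, A, b, hLj⟩ := hL j
  set V := Vsupp (L j) (x j) with hV
  -- facts about elements of V
  have hVfacts : ∀ v : V, A.mulVec (v : Fin (d j) → ℝ) = b ∧
      (∀ i, x j i = 0 → (v : Fin (d j) → ℝ) i = 0) := by
    rintro ⟨v, hv1, hv2⟩
    have hvL : v ∈ L j := extremePoints_subset hv1
    rw [hLj] at hvL
    refine ⟨hvL.1, fun i hi => ?_⟩
    by_contra h
    exact (hv2 h) hi
  -- linear part of f j in terms of values
  have hlin_eq : ∀ u : Fin (d j) → ℝ, (f j).linear u = f j u - f j 0 := by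
    intro u
    have := (f j).map_vadd 0 u
    rw [vadd_eq_add, add_zero, vadd_eq_add] at this
    rw [this]; abel
  -- key: affine dependences among the images vanish
  have key2 : ∀ (s : Finset V) (μ : V → ℝ), (∑ v ∈ s, μ v) = 0 →
      (∑ v ∈ s, μ v • f j (v : Fin (d j) → ℝ)) = 0 → ∀ v ∈ s, μ v = 0 := by
    intro s μ hs0 hf0
    set w : Fin (d j) → ℝ := ∑ v ∈ s, μ v • (v : Fin (d j) → ℝ) with hw
    have hAw : A.mulVec w = 0 := by
      have : A.mulVecLin w = ∑ v ∈ s, μ v • A.mulVecLin (v : Fin (d j) → ℝ) := by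
        rw [hw, map_sum]
        exact Finset.sum_congr rfl fun v _ => by rw [map_smul]
      rw [Matrix.mulVecLin_apply] at this
      rw [this]
      have : ∀ v ∈ s, μ v • A.mulVecLin (v : Fin (d j) → ℝ) = μ v • b := by
        intro v _
        rw [Matrix.mulVecLin_apply, (hVfacts v).1]
      rw [Finset.sum_congr rfl this, ← Finset.sum_smul, hs0, zero_smul]
    have hfw : (f j).linear w = 0 := by
      have h1 : (f j).linear w = ∑ v ∈ s, μ v • (f j).linear (v : Fin (d j) → ℝ) := by
        rw [hw, map_sum]
        exact Finset.sum_congr rfl fun v _ => by rw [map_smul]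
      rw [h1]
      have h2 : ∀ v ∈ s, μ v • (f j).linear (v : Fin (d j) → ℝ)
          = μ v • f j (v : Fin (d j) → ℝ) - μ v • f j 0 := by
        intro v _
        rw [hlin_eq, smul_sub]
      rw [Finset.sum_congr rfl h2, Finset.sum_sub_distrib, hf0, ← Finset.sum_smul, hs0,
        zero_smul, sub_zero]
    have hsupp : ∀ i, x j i = 0 → w i = 0 := by
      intro i hi
      rw [hw, Finset.sum_apply]
      refine Finset.sum_eq_zero fun v _ => ?_
      have : (v : Fin (d j) → ℝ) i = 0 := (hVfacts v).2 i hi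
      simp [this]
    have hw0 : w = 0 := perturb_eq_zero hxv hLj hAw hfw hsupp
    exact affineIndependent_iff.mp haff s μ hs0 (by rw [← hw, hw0])
  have hindf : AffineIndependent ℝ (fun v : V => f j (v : Fin (d j) → ℝ)) :=
    affineIndependent_iff.mpr key2
  constructor
  · intro a ha c hc hac
    have : (⟨a, ha⟩ : V) = ⟨c, hc⟩ := hindf.injective hac
    exact congrArg Subtype.val this
  · have himg : f j '' V = Set.range (fun v : V => f j (v : Fin (d j) → ℝ)) :=
      Set.image_eq_range _ _
    rw [himg]
    exact hindf.range
end

section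
/- Let p = (p₁, …, pₙ) ∈ Dist(R_n, m) be a distribution on the rose graph with n loops and m outcomes, and for each k set A_k := {(e_a, e_b) ∈ ℝ^m × ℝ^m : (p_k)_{ab} ≠ 0}. Then p is an extreme point of Dist(R_n, m) if and only if every A_k is affinely independent and the set (⋂_{k=1}^n Conv(A_k)) ∩ {(α, α) ∈ ℝ^m × ℝ^m : Σ_{i=1}^m α_i = 1} consists of a single point. -/
open Finset

variable {m : ℕ}

/-- The vertex map. -/
def fv (m : ℕ) : Fin m × Fin m → (Fin m → ℝ) × (Fin m → ℝ) :=
  fun ab => (Pi.single ab.1 1, Pi.single ab.2 1)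

lemma fv_inj : Function.Injective (fv m) := by
  rintro ⟨a, b⟩ ⟨a', b'⟩ h
  simp only [fv, Prod.mk.injEq] at h
  have h1 := congrFun h.1 a
  have h2 := congrFun h.2 b
  simp only [Pi.single_apply, if_true, eq_self_iff_true] at h1 h2
  refine Prod.ext ?_ ?_ <;> dsimp only
  · by_contra hne; simp [hne] at h1
  · by_contra hne; simp [hne] at h2

lemma fst_sum_fv (w : Fin m × Fin m → ℝ) (c : Fin m) :
    (∑ ab, w ab • fv m ab).1 c = ∑ b, w (c, b) := by
  simp [fv, Fintype.sum_prod_type, Prod.fst_sum, Finset.sum_apply,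
    Pi.smul_apply, smul_eq_mul, Pi.single_apply, mul_ite, Finset.sum_ite_eq']

lemma snd_sum_fv (w : Fin m × Fin m → ℝ) (c : Fin m) :
    (∑ ab, w ab • fv m ab).2 c = ∑ a, w (a, c) := by
  simp [fv, Fintype.sum_prod_type_right, Prod.snd_sum, Finset.sum_apply,
    Pi.smul_apply, smul_eq_mul, Pi.single_apply, mul_ite, Finset.sum_ite_eq']

def RoseDist (n m : ℕ) : Set (Fin n → Matrix (Fin m) (Fin m) ℝ) :=
  {p | (∀ i a b, 0 ≤ p i a b) ∧ (∀ i, ∑ a, ∑ b, p i a b = 1) ∧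
       ∃ μ : Fin m → ℝ, ∀ i,
         (∀ a, ∑ b, p i a b = μ a) ∧ (∀ b, ∑ a, p i a b = μ b)}

/-- The set of product-simplex vertices `(e_a, e_b)` corresponding to the
nonzero entries of the `k`-th matrix of `p`. -/
def prodA {n m : ℕ} (p : Fin n → Matrix (Fin m) (Fin m) ℝ) (k : Fin n) :
    Set ((Fin m → ℝ) × (Fin m → ℝ)) :=
  {v | ∃ a b, p k a b ≠ 0 ∧ v = (Pi.single a 1, Pi.single b 1)}

variable {n : ℕ} {p : Fin n → Matrix (Fin m) (Fin m) ℝ} {k : Fin n}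

lemma mem_prodA_iff {v : (Fin m → ℝ) × (Fin m → ℝ)} :
    v ∈ prodA p k ↔ ∃ ab : Fin m × Fin m, p k ab.1 ab.2 ≠ 0 ∧ v = fv m ab := by
  constructor
  · rintro ⟨a, b, h, rfl⟩; exact ⟨(a, b), h, rfl⟩
  · rintro ⟨⟨a, b⟩, h, rfl⟩; exact ⟨a, b, h, rfl⟩

/-- Characterization of membership in the convex hull of `prodA p k`. -/
lemma mem_convexHull_prodA {v : (Fin m → ℝ) × (Fin m → ℝ)} :
    v ∈ convexHull ℝ (prodA p k) ↔
      ∃ w : Fin m × Fin m → ℝ, (∀ ab, 0 ≤ w ab) ∧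
        (∀ ab, p k ab.1 ab.2 = 0 → w ab = 0) ∧ (∑ ab, w ab = 1) ∧
        ∑ ab, w ab • fv m ab = v := by
  classical
  constructor
  · intro hv
    rw [mem_convexHull_iff_exists_fintype] at hv
    obtain ⟨ι, _, w, z, hw0, hw1, hz, hx⟩ := hv
    choose g hg hgz using fun i => mem_prodA_iff.1 (hz i)
    refine ⟨fun ab => ∑ i, if g i = ab then w i else 0, ?_, ?_, ?_, ?_⟩
    · intro ab
      exact Finset.sum_nonneg fun i _ => by split; exacts [hw0 i, le_rfl]
    · intro ab hab
      refine Finset.sum_eq_zero fun i _ => ?_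
      have : g i ≠ ab := fun h => hg i (h ▸ hab)
      simp [this]
    · rw [Finset.sum_comm]
      rw [← hw1]
      refine Finset.sum_congr rfl fun i _ => ?_
      simp
    · rw [← hx]
      have : ∀ ab : Fin m × Fin m,
          (∑ i, if g i = ab then w i else 0) • fv m ab
            = ∑ i, if g i = ab then w i • fv m ab else 0 := by
        intro ab
        rw [Finset.sum_smul]
        exact Finset.sum_congr rfl fun i _ => by split <;> simp
      simp_rw [this]
      rw [Finset.sum_comm]
      refine Finset.sum_congr rfl fun i _ => ?_
      rw [Finset.sum_ite_eq (Finset.univ) (g i) (fun ab => w i • fv m ab)]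
      simp [hgz i]
  · rintro ⟨w, hw0, hwsupp, hw1, hwv⟩
    have hT : ∀ ab ∈ Finset.univ.filter (fun ab : Fin m × Fin m => p k ab.1 ab.2 ≠ 0),
        fv m ab ∈ prodA p k := by
      intro ab hab
      rw [Finset.mem_filter] at hab
      exact mem_prodA_iff.2 ⟨ab, hab.2, rfl⟩
    have hsum : ∑ ab ∈ Finset.univ.filter (fun ab : Fin m × Fin m => p k ab.1 ab.2 ≠ 0), w ab
        = 1 := by
      rw [← hw1]
      refine Finset.sum_filter_of_ne fun ab _ hw => ?_
      intro h0; exact hw (hwsupp ab h0)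
    have hcomb : ∑ ab ∈ Finset.univ.filter (fun ab : Fin m × Fin m => p k ab.1 ab.2 ≠ 0),
        w ab • fv m ab = v := by
      rw [← hwv]
      refine Finset.sum_filter_of_ne fun ab _ hw => ?_
      intro h0
      rw [hwsupp ab h0] at hw
      simp at hw
    rw [← hcomb, ← Finset.centerMass_eq_of_sum_1 _ _ hsum]
    exact Finset.centerMass_mem_convexHull _ (fun ab _ => hw0 ab)
      (by rw [hsum]; norm_num) hT

lemma prodA_eq_image : prodA p k = fv m '' {ab : Fin m × Fin m | p k ab.1 ab.2 ≠ 0} := by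
  ext v
  rw [mem_prodA_iff]
  constructor
  · rintro ⟨ab, h, rfl⟩; exact ⟨ab, h, rfl⟩
  · rintro ⟨ab, h, rfl⟩; exact ⟨ab, h, rfl⟩

lemma sum_T_eq {M : Type*} [AddCommMonoid M] (T : Set (Fin m × Fin m))
    [DecidablePred (· ∈ T)] (g : Fin m × Fin m → M) (hg : ∀ ab, ab ∉ T → g ab = 0) :
    ∑ ab, g ab = ∑ t : T, g ↑t := by
  classical
  calc ∑ ab, g ab = ∑ ab ∈ Finset.univ.filter (· ∈ T), g ab :=
        (Finset.sum_filter_of_ne fun x _ hgx => by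
          by_contra hx; exact hgx (hg x hx)).symm
    _ = ∑ t : T, g ↑t := Finset.sum_subtype _ (by simp) g

/-- Characterization of affine independence of `prodA p k`. -/
lemma affineIndependent_prodA_iff :
    AffineIndependent ℝ ((↑) : prodA p k → ((Fin m → ℝ) × (Fin m → ℝ))) ↔
      ∀ w : Fin m × Fin m → ℝ, (∀ ab, p k ab.1 ab.2 = 0 → w ab = 0) →
        (∑ ab, w ab = 0) → (∑ ab, w ab • fv m ab = 0) → ∀ ab, w ab = 0 := by
  classical
  set T : Set (Fin m × Fin m) := {ab : Fin m × Fin m | p k ab.1 ab.2 ≠ 0} with hT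
  let e : T ≃ prodA p k :=
    (Equiv.Set.image (fv m) T fv_inj).trans (Equiv.setCongr prodA_eq_image.symm)
  have hcomp : (((↑) : prodA p k → ((Fin m → ℝ) × (Fin m → ℝ))) ∘ e)
      = fun t : T => fv m ↑t := by
    funext t
    simp [e, Equiv.Set.image_apply, Equiv.setCongr_apply, Function.comp]
  rw [← affineIndependent_equiv e, hcomp, affineIndependent_iff]
  constructor
  · intro H w hsupp hsum hcomb ab
    by_cases hab : p k ab.1 ab.2 = 0
    · exact hsupp ab hab
    · have hg : ∀ ab, ab ∉ T → w ab = 0 := by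
        intro x hx
        rw [hT] at hx
        simp only [Set.mem_setOf_eq, not_not] at hx
        exact hsupp x hx
      have hg' : ∀ ab, ab ∉ T → w ab • fv m ab = 0 := by
        intro x hx; rw [hg x hx, zero_smul]
      refine H Finset.univ (fun t => w ↑t) ?_ ?_ ⟨ab, hab⟩ (Finset.mem_univ _)
      · rw [← sum_T_eq T w hg]; exact hsum
      · rw [← sum_T_eq T (fun ab => w ab • fv m ab) hg']; exact hcomb
  · intro H s W hsum hcomb t ht
    set w : Fin m × Fin m → ℝ :=
      fun ab => if h : ab ∈ T then (if ⟨ab, h⟩ ∈ s then W ⟨ab, h⟩ else 0) else 0 with hw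
    have hwt : ∀ t : T, w ↑t = if t ∈ s then W t else 0 := by
      intro t; simp [hw, t.2]
    have hg : ∀ ab, ab ∉ T → w ab = 0 := by
      intro x hx; simp [hw, hx]
    have hwsupp : ∀ ab, p k ab.1 ab.2 = 0 → w ab = 0 := by
      intro ab hab
      exact hg ab (by simp [hT, hab])
    have hkey := H w hwsupp ?_ ?_
    · have := hkey ↑t
      rwa [hwt t, if_pos ht] at this
    · rw [sum_T_eq T w hg]
      calc ∑ t : T, w ↑t = ∑ t : T, (if t ∈ s then W t else 0) :=
            Finset.sum_congr rfl fun t _ => hwt t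
        _ = ∑ t ∈ s, W t := by rw [Finset.sum_ite_mem, Finset.univ_inter]
        _ = 0 := hsum
    · rw [sum_T_eq T (fun ab => w ab • fv m ab) (fun x hx => by show w x • fv m x = 0; rw [hg x hx, zero_smul])]
      calc ∑ t : T, w ↑t • fv m ↑t = ∑ t : T, (if t ∈ s then W t • fv m ↑t else 0) := by
            refine Finset.sum_congr rfl fun t _ => ?_
            rw [hwt t]; split <;> simp
        _ = ∑ t ∈ s, W t • fv m ↑t := by rw [Finset.sum_ite_mem, Finset.univ_inter]
        _ = 0 := hcomb

lemma exists_scale {ι : Type*} [Fintype ι] (w base : ι → ℝ) (h0 : ∀ i, 0 ≤ base i)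
    (hs : ∀ i, base i = 0 → w i = 0) : ∃ t : ℝ, 0 < t ∧ ∀ i, t * |w i| ≤ base i := by
  classical
  rcases isEmpty_or_nonempty ι with h | h
  · exact ⟨1, one_pos, fun i => isEmptyElim i⟩
  · set g : ι → ℝ := fun i => if w i = 0 then 1 else base i / |w i| with hg
    have hgpos : ∀ i, 0 < g i := by
      intro i
      by_cases hwi : w i = 0
      · simp [hg, hwi]
      · have hbpos : 0 < base i :=
          (h0 i).lt_of_ne (Ne.symm fun hh => hwi (hs i hh))
        have : 0 < |w i| := abs_pos.2 hwi
        simp only [hg, hwi, if_false]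
        positivity
    refine ⟨Finset.univ.inf' Finset.univ_nonempty g, ?_, ?_⟩
    · rw [Finset.lt_inf'_iff]
      exact fun i _ => hgpos i
    · intro i
      by_cases hwi : w i = 0
      · simpa [hwi] using h0 i
      · have hle : Finset.univ.inf' Finset.univ_nonempty g ≤ g i :=
          Finset.inf'_le _ (Finset.mem_univ i)
        have habs : 0 < |w i| := abs_pos.2 hwi
        calc Finset.univ.inf' Finset.univ_nonempty g * |w i| ≤ g i * |w i| :=
              mul_le_mul_of_nonneg_right hle habs.le
          _ = base i := by
              simp only [hg, hwi, if_false]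
              field_simp

lemma pair_mem_inter (hn : 1 ≤ n) (z : Fin n → Matrix (Fin m) (Fin m) ℝ)
    (hz0 : ∀ i a b, 0 ≤ z i a b) (hz1 : ∀ i, ∑ a, ∑ b, z i a b = 1)
    (ν : Fin m → ℝ)
    (hzν : ∀ i, (∀ a, ∑ b, z i a b = ν a) ∧ (∀ b, ∑ a, z i a b = ν b))
    (hsupp : ∀ i a b, p i a b = 0 → z i a b = 0) :
    (ν, ν) ∈ (⋂ k, convexHull ℝ (prodA p k)) ∩
      {v : (Fin m → ℝ) × (Fin m → ℝ) | v.1 = v.2 ∧ ∑ i, v.1 i = 1} := by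
  have hν1 : ∑ c, ν c = 1 := by
    set k₀ : Fin n := ⟨0, hn⟩
    rw [← hz1 k₀]
    exact Finset.sum_congr rfl fun a _ => ((hzν k₀).1 a).symm
  refine ⟨Set.mem_iInter.2 fun k => ?_, rfl, hν1⟩
  refine mem_convexHull_prodA.2 ⟨fun ab => z k ab.1 ab.2, fun ab => hz0 k ab.1 ab.2,
    fun ab h => hsupp k ab.1 ab.2 h, ?_, ?_⟩
  · rw [Fintype.sum_prod_type]; exact hz1 k
  · refine Prod.ext ?_ ?_
    · funext c
      rw [fst_sum_fv]
      exact (hzν k).1 c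
    · funext c
      rw [snd_sum_fv]
      exact (hzν k).2 c

theorem stmt_12 {n m : ℕ} (hn : 1 ≤ n) (hm : 2 ≤ m)
    (p : Fin n → Matrix (Fin m) (Fin m) ℝ) (hp : p ∈ RoseDist n m) :
    p ∈ Set.extremePoints ℝ (RoseDist n m) ↔
      (∀ k, AffineIndependent ℝ ((↑) : prodA p k → ((Fin m → ℝ) × (Fin m → ℝ)))) ∧
      ∃ u, ((⋂ k, convexHull ℝ (prodA p k)) ∩
            {v : (Fin m → ℝ) × (Fin m → ℝ) | v.1 = v.2 ∧ ∑ i, v.1 i = 1}) = {u} := by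
  classical
  obtain ⟨hp0, hp1, μ, hpμ⟩ := hp
  have hpmem : p ∈ RoseDist n m := ⟨hp0, hp1, μ, hpμ⟩
  have hμmem := pair_mem_inter hn p hp0 hp1 μ hpμ (fun i a b h => h)
  have hμ1 : ∑ a, μ a = 1 := by
    rw [← hp1 ⟨0, hn⟩]
    exact Finset.sum_congr rfl fun a _ => ((hpμ ⟨0, hn⟩).1 a).symm
  constructor
  · intro hext
    constructor
    · -- affine independence of each `prodA p k`
      intro k
      rw [affineIndependent_prodA_iff]
      intro w hsupp hsum hcomb
      by_contra hne
      push_neg at hne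
      obtain ⟨ab₀, hab₀⟩ := hne
      obtain ⟨t, ht, habs⟩ := exists_scale w (fun ab => p k ab.1 ab.2)
        (fun ab => hp0 k ab.1 ab.2) hsupp
      have hrow : ∀ a, ∑ b, w (a, b) = 0 := by
        intro a
        have := congrFun (congrArg Prod.fst hcomb) a
        rwa [fst_sum_fv] at this
      have hcol : ∀ b, ∑ a, w (a, b) = 0 := by
        intro b
        have := congrFun (congrArg Prod.snd hcomb) b
        rwa [snd_sum_fv] at this
      set x : Fin n → Matrix (Fin m) (Fin m) ℝ :=
        fun j a b => p j a b + (if j = k then t * w (a, b) else 0) with hxdef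
      set y : Fin n → Matrix (Fin m) (Fin m) ℝ :=
        fun j a b => p j a b - (if j = k then t * w (a, b) else 0) with hydef
      have hbound : ∀ a b, t * |w (a, b)| ≤ p k a b := fun a b => habs (a, b)
      have hxe : ∀ j a b, x j a b = p j a b + (if j = k then t * w (a, b) else 0) :=
        fun j a b => rfl
      have hye : ∀ j a b, y j a b = p j a b - (if j = k then t * w (a, b) else 0) :=
        fun j a b => rfl
      have hxrow : ∀ j a, ∑ b, x j a b = μ a := by
        intro j a
        by_cases hjk : j = k
        · subst hjk
          calc ∑ b, x j a b = ∑ b, (p j a b + t * w (a, b)) :=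
                Finset.sum_congr rfl fun b _ => by rw [hxe, if_pos rfl]
            _ = (∑ b, p j a b) + t * ∑ b, w (a, b) := by
                rw [Finset.sum_add_distrib, Finset.mul_sum]
            _ = μ a := by rw [(hpμ j).1 a, hrow a, mul_zero, add_zero]
        · calc ∑ b, x j a b = ∑ b, p j a b :=
                Finset.sum_congr rfl fun b _ => by rw [hxe, if_neg hjk, add_zero]
            _ = μ a := (hpμ j).1 a
      have hxcol : ∀ j b, ∑ a, x j a b = μ b := by
        intro j b
        by_cases hjk : j = k
        · subst hjk
          calc ∑ a, x j a b = ∑ a, (p j a b + t * w (a, b)) :=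
                Finset.sum_congr rfl fun a _ => by rw [hxe, if_pos rfl]
            _ = (∑ a, p j a b) + t * ∑ a, w (a, b) := by
                rw [Finset.sum_add_distrib, Finset.mul_sum]
            _ = μ b := by rw [(hpμ j).2 b, hcol b, mul_zero, add_zero]
        · calc ∑ a, x j a b = ∑ a, p j a b :=
                Finset.sum_congr rfl fun a _ => by rw [hxe, if_neg hjk, add_zero]
            _ = μ b := (hpμ j).2 b
      have hyrow : ∀ j a, ∑ b, y j a b = μ a := by
        intro j a
        by_cases hjk : j = k
        · subst hjk
          calc ∑ b, y j a b = ∑ b, (p j a b - t * w (a, b)) :=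
                Finset.sum_congr rfl fun b _ => by rw [hye, if_pos rfl]
            _ = (∑ b, p j a b) - t * ∑ b, w (a, b) := by
                rw [Finset.sum_sub_distrib, Finset.mul_sum]
            _ = μ a := by rw [(hpμ j).1 a, hrow a, mul_zero, sub_zero]
        · calc ∑ b, y j a b = ∑ b, p j a b :=
                Finset.sum_congr rfl fun b _ => by rw [hye, if_neg hjk, sub_zero]
            _ = μ a := (hpμ j).1 a
      have hycol : ∀ j b, ∑ a, y j a b = μ b := by
        intro j b
        by_cases hjk : j = k
        · subst hjk
          calc ∑ a, y j a b = ∑ a, (p j a b - t * w (a, b)) :=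
                Finset.sum_congr rfl fun a _ => by rw [hye, if_pos rfl]
            _ = (∑ a, p j a b) - t * ∑ a, w (a, b) := by
                rw [Finset.sum_sub_distrib, Finset.mul_sum]
            _ = μ b := by rw [(hpμ j).2 b, hcol b, mul_zero, sub_zero]
        · calc ∑ a, y j a b = ∑ a, p j a b :=
                Finset.sum_congr rfl fun a _ => by rw [hye, if_neg hjk, sub_zero]
            _ = μ b := (hpμ j).2 b
      have hx : x ∈ RoseDist n m := by
        refine ⟨?_, ?_, μ, fun j => ⟨hxrow j, hxcol j⟩⟩
        · intro i a b
          rw [hxe]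
          by_cases hik : i = k
          · subst hik
            rw [if_pos rfl]
            have h1 := hbound a b
            have h2 : t * -|w (a, b)| ≤ t * w (a, b) :=
              mul_le_mul_of_nonneg_left (neg_abs_le _) ht.le
            rw [mul_neg] at h2
            linarith
          · rw [if_neg hik, add_zero]; exact hp0 i a b
        · intro i
          calc ∑ a, ∑ b, x i a b = ∑ a, μ a :=
              Finset.sum_congr rfl fun a _ => hxrow i a
            _ = 1 := hμ1
      have hy : y ∈ RoseDist n m := by
        refine ⟨?_, ?_, μ, fun j => ⟨hyrow j, hycol j⟩⟩
        · intro i a b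
          rw [hye]
          by_cases hik : i = k
          · subst hik
            rw [if_pos rfl]
            have h1 := hbound a b
            have h2 : t * w (a, b) ≤ t * |w (a, b)| :=
              mul_le_mul_of_nonneg_left (le_abs_self _) ht.le
            linarith
          · rw [if_neg hik, sub_zero]; exact hp0 i a b
        · intro i
          calc ∑ a, ∑ b, y i a b = ∑ a, μ a :=
              Finset.sum_congr rfl fun a _ => hyrow i a
            _ = 1 := hμ1
      have hseg : p ∈ openSegment ℝ x y := by
        refine ⟨1/2, 1/2, by norm_num, by norm_num, by norm_num, ?_⟩
        funext j
        ext a b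
        simp only [Pi.add_apply, Pi.smul_apply, Matrix.add_apply, Matrix.smul_apply,
          smul_eq_mul, hxe, hye]
        ring
      have hxp := hext.2 hx hy hseg
      have hent := congrFun (congrFun (congrFun hxp k) ab₀.1) ab₀.2
      rw [hxe, if_pos rfl] at hent
      have ht0 : t * w (ab₀.1, ab₀.2) = 0 := by linarith
      rcases mul_eq_zero.1 ht0 with h | h
      · exact absurd h (ne_of_gt ht)
      · exact hab₀ (by rwa [Prod.mk.eta] at h)
    · -- the intersection is a singleton
      refine ⟨(μ, μ), Set.eq_singleton_iff_unique_mem.2 ⟨hμmem, ?_⟩⟩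
      rintro v ⟨hv1, hvd, hvs⟩
      have hv1' := Set.mem_iInter.1 hv1
      choose w hw0 hwsupp hwsum hwcomb using fun k => mem_convexHull_prodA.1 (hv1' k)
      set x : Fin n → Matrix (Fin m) (Fin m) ℝ := fun k a b => w k (a, b) with hxdef
      have hxe : ∀ j a b, x j a b = w j (a, b) := fun j a b => rfl
      have hxrow : ∀ j a, ∑ b, x j a b = v.1 a := by
        intro j a
        have := congrFun (congrArg Prod.fst (hwcomb j)) a
        rwa [fst_sum_fv] at this
      have hxcol : ∀ j b, ∑ a, x j a b = v.1 b := by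
        intro j b
        have := congrFun (congrArg Prod.snd (hwcomb j)) b
        rw [snd_sum_fv] at this
        rw [hvd]
        exact this
      obtain ⟨t, ht, habs⟩ := exists_scale (ι := Fin n × Fin m × Fin m)
        (fun i => x i.1 i.2.1 i.2.2 - p i.1 i.2.1 i.2.2) (fun i => p i.1 i.2.1 i.2.2)
        (fun i => hp0 i.1 i.2.1 i.2.2)
        (fun i h0 => by
          have h1 := hwsupp i.1 (i.2.1, i.2.2) h0
          show x i.1 i.2.1 i.2.2 - p i.1 i.2.1 i.2.2 = 0
          have h2 : p i.1 i.2.1 i.2.2 = 0 := h0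
          rw [hxe, h1, h2, sub_zero])
      have hbound : ∀ j a b, t * |x j a b - p j a b| ≤ p j a b := fun j a b => habs (j, a, b)
      set x' : Fin n → Matrix (Fin m) (Fin m) ℝ :=
        fun j a b => p j a b + t * (x j a b - p j a b) with hx'def
      set y' : Fin n → Matrix (Fin m) (Fin m) ℝ :=
        fun j a b => p j a b - t * (x j a b - p j a b) with hy'def
      have hx'e : ∀ j a b, x' j a b = p j a b + t * (x j a b - p j a b) := fun j a b => rfl
      have hy'e : ∀ j a b, y' j a b = p j a b - t * (x j a b - p j a b) := fun j a b => rfl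
      set ν : Fin m → ℝ := fun a => μ a + t * (v.1 a - μ a) with hνdef
      set ν' : Fin m → ℝ := fun a => μ a - t * (v.1 a - μ a) with hν'def
      have hx'row : ∀ j a, ∑ b, x' j a b = ν a := by
        intro j a
        calc ∑ b, x' j a b = (∑ b, p j a b) + t * ((∑ b, x j a b) - ∑ b, p j a b) := by
              simp_rw [hx'e]
              rw [Finset.sum_add_distrib, ← Finset.mul_sum, Finset.sum_sub_distrib]
          _ = ν a := by rw [(hpμ j).1 a, hxrow j a]
      have hx'col : ∀ j b, ∑ a, x' j a b = ν b := by
        intro j b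
        calc ∑ a, x' j a b = (∑ a, p j a b) + t * ((∑ a, x j a b) - ∑ a, p j a b) := by
              simp_rw [hx'e]
              rw [Finset.sum_add_distrib, ← Finset.mul_sum, Finset.sum_sub_distrib]
          _ = ν b := by rw [(hpμ j).2 b, hxcol j b]
      have hy'row : ∀ j a, ∑ b, y' j a b = ν' a := by
        intro j a
        calc ∑ b, y' j a b = (∑ b, p j a b) - t * ((∑ b, x j a b) - ∑ b, p j a b) := by
              simp_rw [hy'e]
              rw [Finset.sum_sub_distrib, ← Finset.mul_sum, Finset.sum_sub_distrib]
          _ = ν' a := by rw [(hpμ j).1 a, hxrow j a]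
      have hy'col : ∀ j b, ∑ a, y' j a b = ν' b := by
        intro j b
        calc ∑ a, y' j a b = (∑ a, p j a b) - t * ((∑ a, x j a b) - ∑ a, p j a b) := by
              simp_rw [hy'e]
              rw [Finset.sum_sub_distrib, ← Finset.mul_sum, Finset.sum_sub_distrib]
          _ = ν' b := by rw [(hpμ j).2 b, hxcol j b]
      have hνsum : ∑ a, ν a = 1 := by
        simp only [hνdef]
        rw [Finset.sum_add_distrib, hμ1, ← Finset.mul_sum, Finset.sum_sub_distrib,
          hvs, hμ1]
        ring
      have hν'sum : ∑ a, ν' a = 1 := by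
        simp only [hν'def]
        rw [Finset.sum_sub_distrib, hμ1, ← Finset.mul_sum, Finset.sum_sub_distrib,
          hvs, hμ1]
        ring
      have hx' : x' ∈ RoseDist n m := by
        refine ⟨?_, ?_, ν, fun j => ⟨hx'row j, hx'col j⟩⟩
        · intro i a b
          rw [hx'e]
          have h1 := hbound i a b
          have h2 : t * -|x i a b - p i a b| ≤ t * (x i a b - p i a b) :=
            mul_le_mul_of_nonneg_left (neg_abs_le _) ht.le
          rw [mul_neg] at h2
          linarith
        · intro i
          calc ∑ a, ∑ b, x' i a b = ∑ a, ν a :=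
              Finset.sum_congr rfl fun a _ => hx'row i a
            _ = 1 := hνsum
      have hy' : y' ∈ RoseDist n m := by
        refine ⟨?_, ?_, ν', fun j => ⟨hy'row j, hy'col j⟩⟩
        · intro i a b
          rw [hy'e]
          have h1 := hbound i a b
          have h2 : t * (x i a b - p i a b) ≤ t * |x i a b - p i a b| :=
            mul_le_mul_of_nonneg_left (le_abs_self _) ht.le
          linarith
        · intro i
          calc ∑ a, ∑ b, y' i a b = ∑ a, ν' a :=
              Finset.sum_congr rfl fun a _ => hy'row i a
            _ = 1 := hν'sum
      have hseg : p ∈ openSegment ℝ x' y' := by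
        refine ⟨1/2, 1/2, by norm_num, by norm_num, by norm_num, ?_⟩
        funext j
        ext a b
        simp only [Pi.add_apply, Pi.smul_apply, Matrix.add_apply, Matrix.smul_apply,
          smul_eq_mul, hx'e, hy'e]
        ring
      have hx'p := hext.2 hx' hy' hseg
      have hxp : ∀ j a b, x j a b = p j a b := by
        intro j a b
        have hent := congrFun (congrFun (congrFun hx'p j) a) b
        rw [hx'e] at hent
        have ht0 : t * (x j a b - p j a b) = 0 := by linarith
        rcases mul_eq_zero.1 ht0 with h | h
        · exact absurd h (ne_of_gt ht)
        · linarith [sub_eq_zero.1 h]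
      have hv1μ : v.1 = μ := by
        funext a
        calc v.1 a = ∑ b, x ⟨0, hn⟩ a b := (hxrow ⟨0, hn⟩ a).symm
          _ = ∑ b, p ⟨0, hn⟩ a b := Finset.sum_congr rfl fun b _ => hxp ⟨0, hn⟩ a b
          _ = μ a := (hpμ ⟨0, hn⟩).1 a
      calc v = (v.1, v.2) := rfl
        _ = (μ, μ) := by rw [← hvd, hv1μ]
  · rintro ⟨hind, u, hu⟩
    have hμu : (μ, μ) = u := by
      have := hμmem
      rw [hu] at this
      exact this
    refine ⟨hpmem, ?_⟩
    intro x hx y hy hseg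
    obtain ⟨s, r, hs, hr, hsr, hxy⟩ := hseg
    have hsupp : ∀ i c d, p i c d = 0 → x i c d = 0 ∧ y i c d = 0 := by
      intro i c d h0
      have he : s * x i c d + r * y i c d = 0 := by
        have := congrFun (congrFun (congrFun hxy i) c) d
        simp only [Pi.add_apply, Pi.smul_apply, Matrix.add_apply, Matrix.smul_apply,
          smul_eq_mul] at this
        rw [this, h0]
      have hx0 := hx.1 i c d
      have hy0 := hy.1 i c d
      constructor
      · nlinarith
      · nlinarith
    have L : ∀ z, z ∈ RoseDist n m → (∀ i c d, p i c d = 0 → z i c d = 0) → z = p := by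
      intro z hz hzsupp
      obtain ⟨hz0, hz1, ν, hzν⟩ := hz
      have hνmem := pair_mem_inter hn z hz0 hz1 ν hzν hzsupp
      rw [hu] at hνmem
      have hνμ : ν = μ := by
        have h2 : (ν, ν) = ((μ, μ) : (Fin m → ℝ) × (Fin m → ℝ)) := by
          rw [hνmem, ← hμu]
        exact congrArg Prod.fst h2
      subst hνμ
      funext i
      ext c d
      have key := affineIndependent_prodA_iff.1 (hind i)
        (fun ab => z i ab.1 ab.2 - p i ab.1 ab.2)
        (fun ab h0 => by show z i ab.1 ab.2 - p i ab.1 ab.2 = 0; rw [hzsupp i ab.1 ab.2 h0, h0, sub_zero])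
        (by
          rw [Finset.sum_sub_distrib, Fintype.sum_prod_type, Fintype.sum_prod_type,
            hz1 i, hp1 i, sub_self])
        (by
          refine Prod.ext ?_ ?_
          · funext c
            rw [fst_sum_fv]
            simp only [Finset.sum_sub_distrib, (hzν i).1 c, (hpμ i).1 c, sub_self]
            rfl
          · funext c
            rw [snd_sum_fv]
            simp only [Finset.sum_sub_distrib, (hzν i).2 c, (hpμ i).2 c, sub_self]
            rfl)
        (c, d)
      exact sub_eq_zero.1 key
    exact L x hx (fun i c d h => (hsupp i c d h).1)
end
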